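/- Let S_{m+1,n+1} (m, n ≥ 1) be the double star obtained from disjoint stars K_{1,m} with center s and K_{1,n} with center t by adding the edge st. Then χ'_es(S_{m+1,n+1}) = χ'_s(S_{m+1,n+1}) = m + n + 1. -/
import Mathlib


open SimpleGraph

variable {V : Type*}

/-- A vertex distinguishing proper edge `k`-coloring (vdec): a proper edge coloring
(edges sharing an endpoint get different colors) such that distinct vertices have
distinct sets of colors on their incident edges. -/
def IsVDEC (G : SimpleGraph V) (k : ℕ) (c : Sym2 V → Fin k) : Prop :=
  (∀ ⦃u v w : V⦄, G.Adj u v → G.Adj u w → v ≠ w → c s(u, v) ≠ c s(u, w)) ∧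
  (∀ u v : V, u ≠ v →
    {i : Fin k | ∃ w, G.Adj u w ∧ c s(u, w) = i} ≠
    {i : Fin k | ∃ w, G.Adj v w ∧ c s(v, w) = i})

/-- `χ'ₛ(G)`: the minimum number of colors in a vdec of `G`. -/
noncomputable def vdecNum (G : SimpleGraph V) : ℕ :=
  sInf {k : ℕ | ∃ c : Sym2 V → Fin k, IsVDEC G k c}

/-- `n_d(G)`: the number of vertices of degree `d` in `G`. -/
noncomputable def numDeg (G : SimpleGraph V) (d : ℕ) : ℕ :=
  Nat.card {v : V // Nat.card (G.neighborSet v) = d}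

/-- An edge coloring is equitable if any two color classes differ in size by at most one. -/
def IsEquitable (G : SimpleGraph V) (k : ℕ) (c : Sym2 V → Fin k) : Prop :=
  ∀ i j : Fin k,
    (Nat.card {e : Sym2 V // e ∈ G.edgeSet ∧ c e = i} : ℤ) -
      (Nat.card {e : Sym2 V // e ∈ G.edgeSet ∧ c e = j} : ℤ) ≤ 1

/-- `χ'ₑₛ(G)`: the minimum number of colors in an equitable vdec of `G`. -/
noncomputable def evdecNum (G : SimpleGraph V) : ℕ :=
  sInf {k : ℕ | ∃ c : Sym2 V → Fin k, IsVDEC G k c ∧ IsEquitable G k c}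

/-- Vertex type of the double star `S_{m+1,n+1}`: `Sum.inl (Sum.inl ())` is the center `s`
with leaves `s₁,…,s_m`, and `Sum.inr (Sum.inl ())` is the center `t` with leaves
`t₁,…,t_n`. -/
abbrev DSVert (m n : ℕ) : Type := (Unit ⊕ Fin m) ⊕ (Unit ⊕ Fin n)

/-- The double star `S_{m+1,n+1}`, obtained from disjoint stars `K_{1,m}` (center `s`)
and `K_{1,n}` (center `t`) by adding the edge `st`. -/
def doubleStar (m n : ℕ) : SimpleGraph (DSVert m n) :=
  SimpleGraph.fromRel (fun a b =>
    (∃ i : Fin m, a = Sum.inl (Sum.inl ()) ∧ b = Sum.inl (Sum.inr i)) ∨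
    (∃ j : Fin n, a = Sum.inr (Sum.inl ()) ∧ b = Sum.inr (Sum.inr j)) ∨
    (a = Sum.inl (Sum.inl ()) ∧ b = Sum.inr (Sum.inl ())))

namespace DS

def S (m n : ℕ) : DSVert m n := Sum.inl (Sum.inl ())
def T (m n : ℕ) : DSVert m n := Sum.inr (Sum.inl ())
def SL (m n : ℕ) (i : Fin m) : DSVert m n := Sum.inl (Sum.inr i)
def TL (m n : ℕ) (j : Fin n) : DSVert m n := Sum.inr (Sum.inr j)

variable {m n : ℕ}

lemma adj_S_SL (i : Fin m) : (doubleStar m n).Adj (S m n) (SL m n i) := by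
  simp [doubleStar, S, SL]

lemma adj_S_T : (doubleStar m n).Adj (S m n) (T m n) := by
  simp [doubleStar, S, T]

lemma adj_T_TL (j : Fin n) : (doubleStar m n).Adj (T m n) (TL m n j) := by
  simp [doubleStar, T, TL]

lemma adj_elim {a b : DSVert m n} (h : (doubleStar m n).Adj a b) :
    (∃ i : Fin m, (a = S m n ∧ b = SL m n i) ∨ (b = S m n ∧ a = SL m n i)) ∨
    (∃ j : Fin n, (a = T m n ∧ b = TL m n j) ∨ (b = T m n ∧ a = TL m n j)) ∨
    ((a = S m n ∧ b = T m n) ∨ (b = S m n ∧ a = T m n)) := by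
  rw [doubleStar, fromRel_adj] at h
  rcases h with ⟨-, (⟨i,ha,hb⟩|⟨j,ha,hb⟩|⟨ha,hb⟩) | (⟨i,hb,ha⟩|⟨j,hb,ha⟩|⟨hb,ha⟩)⟩
  · exact Or.inl ⟨i, Or.inl ⟨ha, hb⟩⟩
  · exact Or.inr (Or.inl ⟨j, Or.inl ⟨ha, hb⟩⟩)
  · exact Or.inr (Or.inr (Or.inl ⟨ha, hb⟩))
  · exact Or.inl ⟨i, Or.inr ⟨hb, ha⟩⟩
  · exact Or.inr (Or.inl ⟨j, Or.inr ⟨hb, ha⟩⟩)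
  · exact Or.inr (Or.inr (Or.inr ⟨hb, ha⟩))

end DS

namespace DS2
open DS
variable {m n : ℕ}

def val (m n : ℕ) : DSVert m n → ℕ
  | Sum.inl (Sum.inl _) => m
  | Sum.inl (Sum.inr i) => i
  | Sum.inr (Sum.inl _) => m + n + 1
  | Sum.inr (Sum.inr j) => m + 1 + j

def col (m n : ℕ) (e : Sym2 (DSVert m n)) : Fin (m + n + 1) :=
  ⟨(Sym2.lift ⟨fun a b => min (val m n a) (val m n b),
      fun a b => min_comm _ _⟩ e) % (m + n + 1),
    Nat.mod_lt _ (Nat.succ_pos _)⟩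

lemma col_S_SL (i : Fin m) : (col m n s(S m n, SL m n i)).val = i := by
  have hi := i.isLt
  simp only [col, val, S, SL, Sym2.lift_mk]
  rw [min_eq_right (by omega)]
  exact Nat.mod_eq_of_lt (by omega)

lemma col_S_T : (col m n s(S m n, T m n)).val = m := by
  simp only [col, val, S, T, Sym2.lift_mk]
  rw [min_eq_left (by omega)]
  exact Nat.mod_eq_of_lt (by omega)

lemma col_T_TL (j : Fin n) : (col m n s(T m n, TL m n j)).val = m + 1 + j := by
  have hj := j.isLt
  simp only [col, val, T, TL, Sym2.lift_mk]
  rw [min_eq_right (by omega)]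
  exact Nat.mod_eq_of_lt (by omega)

end DS2

namespace DS3
open DS DS2
variable {m n : ℕ}

lemma edge_form {e : Sym2 (DSVert m n)} (he : e ∈ (doubleStar m n).edgeSet) :
    (∃ i : Fin m, e = s(S m n, SL m n i)) ∨ e = s(S m n, T m n) ∨
    ∃ j : Fin n, e = s(T m n, TL m n j) := by
  induction e using Sym2.ind with
  | _ a b =>
    rw [SimpleGraph.mem_edgeSet] at he
    rcases adj_elim he with ⟨i, ⟨ha, hb⟩ | ⟨hb, ha⟩⟩ | ⟨j, ⟨ha, hb⟩ | ⟨hb, ha⟩⟩ |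
      (⟨ha, hb⟩ | ⟨hb, ha⟩)
    · exact Or.inl ⟨i, by rw [ha, hb]⟩
    · exact Or.inl ⟨i, by rw [ha, hb, Sym2.eq_swap]⟩
    · exact Or.inr (Or.inr ⟨j, by rw [ha, hb]⟩)
    · exact Or.inr (Or.inr ⟨j, by rw [ha, hb, Sym2.eq_swap]⟩)
    · exact Or.inr (Or.inl (by rw [ha, hb]))
    · exact Or.inr (Or.inl (by rw [ha, hb, Sym2.eq_swap]))

lemma col_inj {e e' : Sym2 (DSVert m n)} (he : e ∈ (doubleStar m n).edgeSet)
    (he' : e' ∈ (doubleStar m n).edgeSet) (h : col m n e = col m n e') : e = e' := by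
  have hv := congrArg Fin.val h
  rcases edge_form he with ⟨i, rfl⟩ | rfl | ⟨j, rfl⟩ <;>
    rcases edge_form he' with ⟨i', rfl⟩ | rfl | ⟨j', rfl⟩
  · rw [col_S_SL, col_S_SL] at hv
    rw [show i = i' from Fin.ext hv]
  · rw [col_S_SL, col_S_T] at hv; exact absurd hv (by have := i.isLt; omega)
  · rw [col_S_SL, col_T_TL] at hv; exact absurd hv (by have := i.isLt; omega)
  · rw [col_S_T, col_S_SL] at hv; exact absurd hv (by have := i'.isLt; omega)
  · rfl
  · rw [col_S_T, col_T_TL] at hv; exact absurd hv (by omega)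
  · rw [col_T_TL, col_S_SL] at hv; exact absurd hv (by have := i'.isLt; omega)
  · rw [col_T_TL, col_S_T] at hv; exact absurd hv (by omega)
  · rw [col_T_TL, col_T_TL] at hv
    rw [show j = j' from Fin.ext (by omega)]

lemma proper {u v w : DSVert m n} (huv : (doubleStar m n).Adj u v)
    (huw : (doubleStar m n).Adj u w) (hvw : v ≠ w) :
    col m n s(u, v) ≠ col m n s(u, w) := by
  intro h
  have := col_inj ((SimpleGraph.mem_edgeSet _).mpr huv) ((SimpleGraph.mem_edgeSet _).mpr huw) h
  rw [Sym2.eq_iff] at this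
  rcases this with ⟨-, h2⟩ | ⟨h1, h2⟩
  · exact hvw h2
  · exact hvw (h2.trans h1)

end DS3

namespace DS4
open DS DS2 DS3
variable {m n : ℕ}

lemma cset_S (hm : 1 ≤ m) :
    {x : Fin (m+n+1) | ∃ w, (doubleStar m n).Adj (S m n) w ∧ col m n s(S m n, w) = x} =
    {x : Fin (m+n+1) | x.val ≤ m} := by
  ext x
  simp only [Set.mem_setOf_eq]
  constructor
  · rintro ⟨w, hw, rfl⟩
    rcases adj_elim hw with ⟨i, ⟨-, rfl⟩ | ⟨-, hc⟩⟩ | ⟨j, ⟨hc, -⟩ | ⟨-, hc⟩⟩ |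
      (⟨-, rfl⟩ | ⟨-, hc⟩)
    · rw [col_S_SL]; have := i.isLt; omega
    · exact absurd hc (by simp [S, SL])
    · exact absurd hc (by simp [S, T])
    · exact absurd hc (by simp [S, TL])
    · rw [col_S_T]
    · exact absurd hc (by simp [S, T])
  · intro hx
    rcases lt_or_eq_of_le hx with hlt | heq
    · exact ⟨SL m n ⟨x.val, hlt⟩, adj_S_SL _, Fin.ext (col_S_SL _)⟩
    · exact ⟨T m n, adj_S_T, Fin.ext (by rw [col_S_T, heq])⟩

lemma cset_T (hn : 1 ≤ n) :
    {x : Fin (m+n+1) | ∃ w, (doubleStar m n).Adj (T m n) w ∧ col m n s(T m n, w) = x} =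
    {x : Fin (m+n+1) | m ≤ x.val} := by
  ext x
  simp only [Set.mem_setOf_eq]
  constructor
  · rintro ⟨w, hw, rfl⟩
    rcases adj_elim hw with ⟨i, ⟨hc, -⟩ | ⟨-, hc⟩⟩ | ⟨j, ⟨-, rfl⟩ | ⟨-, hc⟩⟩ |
      (⟨hc, -⟩ | ⟨rfl, -⟩)
    · exact absurd hc (by simp [S, T])
    · exact absurd hc (by simp [T, SL])
    · rw [col_T_TL]; omega
    · exact absurd hc (by simp [T, TL])
    · exact absurd hc (by simp [S, T])
    · rw [Sym2.eq_swap, col_S_T]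
  · intro hx
    rcases lt_or_eq_of_le hx with hlt | heq
    · have hj : x.val - m - 1 < n := by have := x.isLt; omega
      refine ⟨TL m n ⟨x.val - m - 1, hj⟩, adj_T_TL _, Fin.ext ?_⟩
      rw [col_T_TL]; simp; omega
    · exact ⟨S m n, adj_S_T.symm, Fin.ext (by rw [Sym2.eq_swap, col_S_T]; exact heq)⟩

lemma cset_SL (i : Fin m) :
    {x : Fin (m+n+1) | ∃ w, (doubleStar m n).Adj (SL m n i) w ∧ col m n s(SL m n i, w) = x} =
    {x : Fin (m+n+1) | x.val = i.val} := by
  ext x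
  simp only [Set.mem_setOf_eq]
  constructor
  · rintro ⟨w, hw, rfl⟩
    rcases adj_elim hw with ⟨i', ⟨hc, -⟩ | ⟨rfl, hc⟩⟩ | ⟨j, ⟨hc, -⟩ | ⟨-, hc⟩⟩ |
      (⟨hc, -⟩ | ⟨-, hc⟩)
    · exact absurd hc (by simp [S, SL])
    · have : i = i' := by simpa [SL] using hc
      subst this
      rw [Sym2.eq_swap, col_S_SL]
    · exact absurd hc (by simp [T, SL])
    · exact absurd hc (by simp [SL, TL])
    · exact absurd hc (by simp [S, SL])
    · exact absurd hc (by simp [T, SL])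
  · intro hx
    exact ⟨S m n, (adj_S_SL i).symm, Fin.ext (by rw [Sym2.eq_swap, col_S_SL, hx])⟩

lemma cset_TL (j : Fin n) :
    {x : Fin (m+n+1) | ∃ w, (doubleStar m n).Adj (TL m n j) w ∧ col m n s(TL m n j, w) = x} =
    {x : Fin (m+n+1) | x.val = m + 1 + j.val} := by
  ext x
  simp only [Set.mem_setOf_eq]
  constructor
  · rintro ⟨w, hw, rfl⟩
    rcases adj_elim hw with ⟨i, ⟨hc, -⟩ | ⟨-, hc⟩⟩ | ⟨j', ⟨hc, -⟩ | ⟨rfl, hc⟩⟩ |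
      (⟨hc, -⟩ | ⟨-, hc⟩)
    · exact absurd hc (by simp [S, TL])
    · exact absurd hc (by simp [SL, TL])
    · exact absurd hc (by simp [T, TL])
    · have : j = j' := by simpa [TL] using hc
      subst this
      rw [Sym2.eq_swap, col_T_TL]
    · exact absurd hc (by simp [S, TL])
    · exact absurd hc (by simp [T, TL])
  · intro hx
    exact ⟨T m n, (adj_T_TL j).symm, Fin.ext (by rw [Sym2.eq_swap, col_T_TL, hx])⟩

end DS4

namespace DS5
open DS DS2 DS3 DS4
variable {m n : ℕ}

/-- the color set of a vertex under `col`. -/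
def cs (m n : ℕ) (u : DSVert m n) : Set (Fin (m + n + 1)) :=
  {x : Fin (m+n+1) | ∃ w, (doubleStar m n).Adj u w ∧ col m n s(u, w) = x}

lemma csets_ne (hm : 1 ≤ m) (hn : 1 ≤ n) (u v : DSVert m n) (huv : u ≠ v) :
    cs m n u ≠ cs m n v := by
  have key : ∀ a b : DSVert m n, a ≠ b →
      ((∃ x : Fin (m+n+1), x ∈ cs m n a ∧ x ∉ cs m n b) ∨
       (∃ x : Fin (m+n+1), x ∈ cs m n b ∧ x ∉ cs m n a)) := by
    intro a b hab
    rcases a with (⟨⟩|i)|(⟨⟩|j) <;> rcases b with (⟨⟩|i')|(⟨⟩|j')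
    · exact absurd rfl hab
    · -- S vs SL i'
      refine Or.inl ⟨⟨m, by omega⟩, ?_, ?_⟩
      · rw [show (Sum.inl (Sum.inl ()) : DSVert m n) = S m n from rfl, cs, cset_S hm]; simp
      · rw [show (Sum.inl (Sum.inr i') : DSVert m n) = SL m n i' from rfl, cs, cset_SL i']
        simp; have := i'.isLt; omega
    · -- S vs T
      refine Or.inl ⟨⟨0, by omega⟩, ?_, ?_⟩
      · rw [show (Sum.inl (Sum.inl ()) : DSVert m n) = S m n from rfl, cs, cset_S hm]; simp
      · rw [show (Sum.inr (Sum.inl ()) : DSVert m n) = T m n from rfl, cs, cset_T hn]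
        simp; omega
    · -- S vs TL j'
      refine Or.inl ⟨⟨0, by omega⟩, ?_, ?_⟩
      · rw [show (Sum.inl (Sum.inl ()) : DSVert m n) = S m n from rfl, cs, cset_S hm]; simp
      · rw [show (Sum.inr (Sum.inr j') : DSVert m n) = TL m n j' from rfl, cs, cset_TL j']
        simp; omega
    · -- SL i vs S
      refine Or.inr ⟨⟨m, by omega⟩, ?_, ?_⟩
      · rw [show (Sum.inl (Sum.inl ()) : DSVert m n) = S m n from rfl, cs, cset_S hm]; simp
      · rw [show (Sum.inl (Sum.inr i) : DSVert m n) = SL m n i from rfl, cs, cset_SL i]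
        simp; have := i.isLt; omega
    · -- SL i vs SL i'
      have hii : i ≠ i' := fun h => hab (by rw [h])
      refine Or.inl ⟨⟨i.val, by have := i.isLt; omega⟩, ?_, ?_⟩
      · rw [show (Sum.inl (Sum.inr i) : DSVert m n) = SL m n i from rfl, cs, cset_SL i]; simp
      · rw [show (Sum.inl (Sum.inr i') : DSVert m n) = SL m n i' from rfl, cs, cset_SL i']
        simp
        exact fun h => hii (Fin.ext h)
    · -- SL i vs T
      refine Or.inr ⟨⟨m, by omega⟩, ?_, ?_⟩
      · rw [show (Sum.inr (Sum.inl ()) : DSVert m n) = T m n from rfl, cs, cset_T hn]; simp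
      · rw [show (Sum.inl (Sum.inr i) : DSVert m n) = SL m n i from rfl, cs, cset_SL i]
        simp; have := i.isLt; omega
    · -- SL i vs TL j'
      refine Or.inl ⟨⟨i.val, by have := i.isLt; omega⟩, ?_, ?_⟩
      · rw [show (Sum.inl (Sum.inr i) : DSVert m n) = SL m n i from rfl, cs, cset_SL i]; simp
      · rw [show (Sum.inr (Sum.inr j') : DSVert m n) = TL m n j' from rfl, cs, cset_TL j']
        simp; have := i.isLt; omega
    · -- T vs S
      refine Or.inr ⟨⟨0, by omega⟩, ?_, ?_⟩
      · rw [show (Sum.inl (Sum.inl ()) : DSVert m n) = S m n from rfl, cs, cset_S hm]; simp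
      · rw [show (Sum.inr (Sum.inl ()) : DSVert m n) = T m n from rfl, cs, cset_T hn]
        simp; omega
    · -- T vs SL i'
      refine Or.inl ⟨⟨m, by omega⟩, ?_, ?_⟩
      · rw [show (Sum.inr (Sum.inl ()) : DSVert m n) = T m n from rfl, cs, cset_T hn]; simp
      · rw [show (Sum.inl (Sum.inr i') : DSVert m n) = SL m n i' from rfl, cs, cset_SL i']
        simp; have := i'.isLt; omega
    · exact absurd rfl hab
    · -- T vs TL j'
      refine Or.inl ⟨⟨m, by omega⟩, ?_, ?_⟩
      · rw [show (Sum.inr (Sum.inl ()) : DSVert m n) = T m n from rfl, cs, cset_T hn]; simp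
      · rw [show (Sum.inr (Sum.inr j') : DSVert m n) = TL m n j' from rfl, cs, cset_TL j']
        simp; omega
    · -- TL j vs S
      refine Or.inr ⟨⟨0, by omega⟩, ?_, ?_⟩
      · rw [show (Sum.inl (Sum.inl ()) : DSVert m n) = S m n from rfl, cs, cset_S hm]; simp
      · rw [show (Sum.inr (Sum.inr j) : DSVert m n) = TL m n j from rfl, cs, cset_TL j]
        simp; omega
    · -- TL j vs SL i'
      refine Or.inr ⟨⟨i'.val, by have := i'.isLt; omega⟩, ?_, ?_⟩
      · rw [show (Sum.inl (Sum.inr i') : DSVert m n) = SL m n i' from rfl, cs, cset_SL i']; simp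
      · rw [show (Sum.inr (Sum.inr j) : DSVert m n) = TL m n j from rfl, cs, cset_TL j]
        simp; have := i'.isLt; omega
    · -- TL j vs T
      refine Or.inr ⟨⟨m, by omega⟩, ?_, ?_⟩
      · rw [show (Sum.inr (Sum.inl ()) : DSVert m n) = T m n from rfl, cs, cset_T hn]; simp
      · rw [show (Sum.inr (Sum.inr j) : DSVert m n) = TL m n j from rfl, cs, cset_TL j]
        simp; omega
    · -- TL j vs TL j'
      have hjj : j ≠ j' := fun h => hab (by rw [h])
      refine Or.inl ⟨⟨m + 1 + j.val, by have := j.isLt; omega⟩, ?_, ?_⟩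
      · rw [show (Sum.inr (Sum.inr j) : DSVert m n) = TL m n j from rfl, cs, cset_TL j]; simp
      · rw [show (Sum.inr (Sum.inr j') : DSVert m n) = TL m n j' from rfl, cs, cset_TL j']
        simp
        intro h
        exact hjj (Fin.ext (by omega))
  rcases key u v huv with ⟨x, hx1, hx2⟩ | ⟨x, hx1, hx2⟩
  · intro h; exact hx2 (h ▸ hx1)
  · intro h; exact hx2 (h ▸ hx1)

lemma col_isVDEC (hm : 1 ≤ m) (hn : 1 ≤ n) :
    IsVDEC (doubleStar m n) (m + n + 1) (col m n) :=
  ⟨fun _ _ _ huv huw hvw => proper huv huw hvw,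
   fun u v huv => csets_ne hm hn u v huv⟩

end DS5

namespace DS6
open DS DS2 DS3 DS4 DS5
variable {m n : ℕ}

lemma class_card (i : Fin (m + n + 1)) :
    Nat.card {e : Sym2 (DSVert m n) // e ∈ (doubleStar m n).edgeSet ∧ col m n e = i} ≤ 1 := by
  have hs : Subsingleton {e : Sym2 (DSVert m n) // e ∈ (doubleStar m n).edgeSet ∧ col m n e = i} :=
    ⟨fun ⟨e, he, hce⟩ ⟨e', he', hce'⟩ => Subtype.ext (col_inj he he' (hce.trans hce'.symm))⟩
  rcases isEmpty_or_nonempty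
      {e : Sym2 (DSVert m n) // e ∈ (doubleStar m n).edgeSet ∧ col m n e = i} with h | h
  · simp [Nat.card_of_isEmpty]
  · haveI : Unique {e : Sym2 (DSVert m n) // e ∈ (doubleStar m n).edgeSet ∧ col m n e = i} :=
      uniqueOfSubsingleton (Classical.arbitrary _)
    exact le_of_eq Nat.card_unique

lemma col_isEquitable : IsEquitable (doubleStar m n) (m + n + 1) (col m n) := by
  intro i j
  have h1 := class_card (m := m) (n := n) i
  have h2 := class_card (m := m) (n := n) j
  omega

lemma pendant_S {k : ℕ} (c : Sym2 (DSVert m n) → Fin k) (i : Fin m) :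
    {x : Fin k | ∃ w, (doubleStar m n).Adj (SL m n i) w ∧ c s(SL m n i, w) = x} =
      {c s(S m n, SL m n i)} := by
  ext x
  simp only [Set.mem_setOf_eq, Set.mem_singleton_iff]
  constructor
  · rintro ⟨w, hw, rfl⟩
    rcases adj_elim hw with ⟨i', ⟨hc, -⟩ | ⟨rfl, hc⟩⟩ | ⟨j, ⟨hc, -⟩ | ⟨-, hc⟩⟩ |
      (⟨hc, -⟩ | ⟨-, hc⟩)
    · exact absurd hc (by simp [S, SL])
    · rw [Sym2.eq_swap]
    · exact absurd hc (by simp [T, SL])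
    · exact absurd hc (by simp [SL, TL])
    · exact absurd hc (by simp [S, SL])
    · exact absurd hc (by simp [T, SL])
  · rintro rfl
    exact ⟨S m n, (adj_S_SL i).symm, by rw [Sym2.eq_swap]⟩

lemma pendant_T {k : ℕ} (c : Sym2 (DSVert m n) → Fin k) (j : Fin n) :
    {x : Fin k | ∃ w, (doubleStar m n).Adj (TL m n j) w ∧ c s(TL m n j, w) = x} =
      {c s(T m n, TL m n j)} := by
  ext x
  simp only [Set.mem_setOf_eq, Set.mem_singleton_iff]
  constructor
  · rintro ⟨w, hw, rfl⟩
    rcases adj_elim hw with ⟨i, ⟨hc, -⟩ | ⟨-, hc⟩⟩ | ⟨j', ⟨hc, -⟩ | ⟨rfl, hc⟩⟩ |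
      (⟨hc, -⟩ | ⟨-, hc⟩)
    · exact absurd hc (by simp [S, TL])
    · exact absurd hc (by simp [SL, TL])
    · exact absurd hc (by simp [T, TL])
    · rw [Sym2.eq_swap]
    · exact absurd hc (by simp [S, TL])
    · exact absurd hc (by simp [T, TL])
  · rintro rfl
    exact ⟨T m n, (adj_T_TL j).symm, by rw [Sym2.eq_swap]⟩

lemma lower_bound {k : ℕ} (c : Sym2 (DSVert m n) → Fin k)
    (h : IsVDEC (doubleStar m n) k c) : m + n + 1 ≤ k := by
  obtain ⟨hp, hd⟩ := h
  classical
  let F : Fin m ⊕ (Unit ⊕ Fin n) → Fin k := fun x =>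
    match x with
    | Sum.inl i => c s(S m n, SL m n i)
    | Sum.inr (Sum.inl _) => c s(S m n, T m n)
    | Sum.inr (Sum.inr j) => c s(T m n, TL m n j)
  have hST : ∀ (i : Fin m) (j : Fin n), c s(S m n, SL m n i) ≠ c s(T m n, TL m n j) := by
    intro i j hc
    apply hd (SL m n i) (TL m n j) (by simp [SL, TL])
    rw [pendant_S c i, pendant_T c j, hc]
  have hinj : Function.Injective F := by
    rintro (i | ⟨⟩ | j) (i' | ⟨⟩ | j') hxy
    · by_contra hne
      have hii : i ≠ i' := fun h => hne (by rw [h])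
      exact hp (adj_S_SL i) (adj_S_SL i')
        (fun h => hii (by simpa [SL] using h)) hxy
    · exact absurd hxy (hp (adj_S_SL i) adj_S_T (by simp [SL, T]))
    · exact absurd hxy (hST i j')
    · exact absurd hxy.symm (hp (adj_S_SL i') adj_S_T (by simp [SL, T]))
    · rfl
    · exfalso
      have h2 : c s(T m n, S m n) ≠ c s(T m n, TL m n j') :=
        hp adj_S_T.symm (adj_T_TL j') (by simp [S, TL])
      rw [Sym2.eq_swap] at h2
      exact h2 hxy
    · exact absurd hxy.symm (hST i' j)
    · exfalso
      have h2 : c s(T m n, S m n) ≠ c s(T m n, TL m n j) :=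
        hp adj_S_T.symm (adj_T_TL j) (by simp [S, TL])
      rw [Sym2.eq_swap] at h2
      exact h2 hxy.symm
    · by_contra hne
      have hjj : j ≠ j' := fun h => hne (by rw [h])
      exact hp (adj_T_TL j) (adj_T_TL j')
        (fun h => hjj (by simpa [TL] using h)) hxy
  have hcard := Fintype.card_le_of_injective F hinj
  simp at hcard
  omega

end DS6

/-- For the double star `S_{m+1,n+1}` with `m, n ≥ 1`,
`χ'ₑₛ(S_{m+1,n+1}) = χ'ₛ(S_{m+1,n+1}) = m + n + 1`. -/
theorem evdecNum_doubleStar (m n : ℕ) (hm : 1 ≤ m) (hn : 1 ≤ n) :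
    evdecNum (doubleStar m n) = vdecNum (doubleStar m n) ∧
    vdecNum (doubleStar m n) = m + n + 1 := by
  have hmem_v : m + n + 1 ∈
      {k : ℕ | ∃ c : Sym2 (DSVert m n) → Fin k, IsVDEC (doubleStar m n) k c} :=
    ⟨DS2.col m n, DS5.col_isVDEC hm hn⟩
  have hmem_e : m + n + 1 ∈
      {k : ℕ | ∃ c : Sym2 (DSVert m n) → Fin k,
        IsVDEC (doubleStar m n) k c ∧ IsEquitable (doubleStar m n) k c} :=
    ⟨DS2.col m n, DS5.col_isVDEC hm hn, DS6.col_isEquitable⟩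
  have h1 : vdecNum (doubleStar m n) = m + n + 1 := by
    rw [vdecNum]
    refine le_antisymm (Nat.sInf_le hmem_v) (le_csInf ⟨_, hmem_v⟩ ?_)
    rintro k ⟨c, hc⟩
    exact DS6.lower_bound c hc
  have h2 : evdecNum (doubleStar m n) = m + n + 1 := by
    rw [evdecNum]
    refine le_antisymm (Nat.sInf_le hmem_e) (le_csInf ⟨_, hmem_e⟩ ?_)
    rintro k ⟨c, hc, -⟩
    exact DS6.lower_bound c hc
  exact ⟨h2.trans h1.symm, h1⟩
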